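/- Every two-dimensional evolution algebra over a field K with trivial (zero-dimensional) annihilator is isomorphic to a two-dimensional evolution algebra over K with natural basis {e_1, e_2} such that e_1e_1 ∈ {e_1, e_2, e_1 + e_2}. -/

import Mathlib

open scoped BigOperators

noncomputable section

/-- The product in the `n`-dimensional evolution algebra over `K` (on the model space
`Fin n → K`, whose standard basis is the natural basis) with structure constants `t`,
so that `eᵢ * eᵢ = ∑ⱼ t i j • eⱼ` and `eᵢ * eⱼ = 0` for `i ≠ j`. -/
def evolMul {K : Type*} [Field K] {n : ℕ} (t : Fin n → Fin n → K)
    (x y : Fin n → K) : Fin n → K :=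
  fun k => ∑ i, x i * y i * t i k

lemma evolMul_add_left {K : Type*} [Field K] {n : ℕ} (t : Fin n → Fin n → K)
    (a b v : Fin n → K) : evolMul t (a + b) v = evolMul t a v + evolMul t b v := by
  funext k
  simp [evolMul, add_mul, Finset.sum_add_distrib]

lemma evolMul_add_right {K : Type*} [Field K] {n : ℕ} (t : Fin n → Fin n → K)
    (v a b : Fin n → K) : evolMul t v (a + b) = evolMul t v a + evolMul t v b := by
  funext k
  simp [evolMul, mul_add, add_mul, Finset.sum_add_distrib]

lemma evolMul_smul_left {K : Type*} [Field K] {n : ℕ} (t : Fin n → Fin n → K)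
    (c : K) (a v : Fin n → K) : evolMul t (c • a) v = c • evolMul t a v := by
  funext k
  simp [evolMul, Finset.mul_sum, mul_assoc]

lemma evolMul_smul_right {K : Type*} [Field K] {n : ℕ} (t : Fin n → Fin n → K)
    (c : K) (v a : Fin n → K) : evolMul t v (c • a) = c • evolMul t v a := by
  funext k
  simp [evolMul, Finset.mul_sum]
  ring_nf
  apply Finset.sum_congr rfl
  intro i _
  ring

/-- The annihilator of the evolution algebra with structure constants `t`. -/
def evolAnn {K : Type*} [Field K] {n : ℕ} (t : Fin n → Fin n → K) :
    Submodule K (Fin n → K) where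
  carrier := {u | ∀ v, evolMul t u v = 0 ∧ evolMul t v u = 0}
  zero_mem' := by
    intro v
    constructor <;> · funext k; simp [evolMul]
  add_mem' := by
    intro a b ha hb v
    exact ⟨by rw [evolMul_add_left, (ha v).1, (hb v).1, add_zero],
           by rw [evolMul_add_right, (ha v).2, (hb v).2, add_zero]⟩
  smul_mem' := by
    intro c a ha v
    exact ⟨by rw [evolMul_smul_left, (ha v).1, smul_zero],
           by rw [evolMul_smul_right, (ha v).2, smul_zero]⟩

/-- The derived algebra (span of all products). -/
def evolDerived {K : Type*} [Field K] {n : ℕ} (t : Fin n → Fin n → K) :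
    Submodule K (Fin n → K) :=
  Submodule.span K {w | ∃ u v, evolMul t u v = w}

/-- Two evolution algebras (given by structure constants) are isomorphic. -/
def EvolIsom {K : Type*} [Field K] {n : ℕ} (t t' : Fin n → Fin n → K) : Prop :=
  ∃ f : (Fin n → K) ≃ₗ[K] (Fin n → K),
    ∀ u v, evolMul t' (f u) (f v) = f (evolMul t u v)

/-- Two evolution algebras (given by structure constants) are isotopic. -/
def EvolIsotopic {K : Type*} [Field K] {n : ℕ} (t t' : Fin n → Fin n → K) : Prop :=
  ∃ f g h : (Fin n → K) ≃ₗ[K] (Fin n → K),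
    ∀ u v, evolMul t' (f u) (g v) = h (evolMul t u v)

/-- Two evolution algebras (given by structure constants) are strongly isotopic. -/
def EvolStrongIsotopic {K : Type*} [Field K] {n : ℕ} (t t' : Fin n → Fin n → K) : Prop :=
  ∃ f h : (Fin n → K) ≃ₗ[K] (Fin n → K),
    ∀ u v, evolMul t' (f u) (f v) = h (evolMul t u v)


def scaleEquiv {K : Type*} [Field K] (d : Fin 2 → K) (hd : ∀ i, d i ≠ 0) :
    (Fin 2 → K) ≃ₗ[K] (Fin 2 → K) :=
  LinearEquiv.piCongrRight fun i => LinearEquiv.smulOfNeZero K K (d i) (hd i)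

lemma isom_scale {K : Type*} [Field K] (t : Fin 2 → Fin 2 → K) (d : Fin 2 → K)
    (hd : ∀ i, d i ≠ 0) :
    EvolIsom t (fun i k => d k * t i k / d i ^ 2) := by
  refine ⟨scaleEquiv d hd, fun u v => ?_⟩
  funext k
  have h0 := hd 0; have h1 := hd 1
  simp only [evolMul, scaleEquiv, LinearEquiv.piCongrRight_apply,
    LinearEquiv.smulOfNeZero_apply, smul_eq_mul, Fin.sum_univ_two]
  field_simp

lemma row_ne_zero {K : Type*} [Field K] (t : Fin 2 → Fin 2 → K)
    (hann : evolAnn t = ⊥) : ¬ (t 0 0 = 0 ∧ t 0 1 = 0) := by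
  rintro ⟨h0, h1⟩
  have ht : ∀ k, t 0 k = 0 := by
    intro k; fin_cases k; exacts [h0, h1]
  have hmem : (Pi.single 0 1 : Fin 2 → K) ∈ evolAnn t := by
    intro v
    constructor <;>
      · funext k
        simp [evolMul, Fin.sum_univ_two, Pi.single_apply, ht k]
  rw [hann, Submodule.mem_bot] at hmem
  have := congrFun hmem 0
  simp [Pi.single_apply] at this

lemma evolMul_single_self {K : Type*} [Field K] (t' : Fin 2 → Fin 2 → K) :
    evolMul t' (Pi.single 0 1) (Pi.single 0 1) = t' 0 := by
  funext k
  simp [evolMul, Fin.sum_univ_two, Pi.single_apply]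

/-
STATEMENT 8: Every two-dimensional evolution algebra over K with trivial
(zero-dimensional) annihilator is isomorphic to a two-dimensional evolution algebra
over K with natural basis {e₁, e₂} such that e₁e₁ ∈ {e₁, e₂, e₁ + e₂}.
-/
theorem isom_with_first_square_basisLike
    {K : Type*} [Field K] (t : Fin 2 → Fin 2 → K) (hann : evolAnn t = ⊥) :
    ∃ t' : Fin 2 → Fin 2 → K,
      EvolIsom t t' ∧
      evolMul t' (Pi.single 0 1) (Pi.single 0 1) ∈
        ({Pi.single 0 1, Pi.single 1 1, Pi.single 0 1 + Pi.single 1 1} :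
          Set (Fin 2 → K)) := by
  have hrow := row_ne_zero t hann
  by_cases hb : t 0 1 = 0
  · have ha : t 0 0 ≠ 0 := fun h => hrow ⟨h, hb⟩
    refine ⟨_, isom_scale t ![t 0 0, 1] (by intro i; fin_cases i <;> simp [ha]), ?_⟩
    rw [evolMul_single_self]
    left
    funext k
    fin_cases k <;> simp [Pi.single_apply, hb] <;> field_simp <;> ring
  · by_cases ha : t 0 0 = 0
    · refine ⟨_, isom_scale t ![1, 1 / t 0 1] (by intro i; fin_cases i <;> simp [hb]), ?_⟩
      rw [evolMul_single_self]
      right; left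
      funext k
      fin_cases k <;> simp [Pi.single_apply, ha] <;> field_simp <;> ring
    · refine ⟨_, isom_scale t ![t 0 0, t 0 0 ^ 2 / t 0 1]
        (by intro i; fin_cases i <;> simp [ha, hb]), ?_⟩
      rw [evolMul_single_self]
      right; right
      funext k
      fin_cases k <;> simp [Pi.single_apply] <;> field_simp <;> ring
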